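/- Let n ≥ 2 and let X₁, …, X_n be i.i.d. real random variables on a probability space with mean μ, variance σ² = E[(X₁−μ)²] > 0, and finite fourth central moment μ₄ = E[(X₁−μ)⁴] < ∞; let κ = μ₄/σ⁴ − 3, s² = (1/(n−1))∑(X_i − X̄)², and c* = (κ/n + (n+1)/(n−1))⁻¹. Then the relative efficiency of the MSE-best biased estimator over the sample variance satisfies E[(s² − σ²)²] / E[(c*·s² − σ²)²] = 1 + κ/n + 2/(n−1), and this quantity is strictly greater than 1. -/

import Mathlib

open MeasureTheory ProbabilityTheory

section MbbeAux
open Finset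

variable {Ω : Type*} [MeasurableSpace Ω] {P : Measure Ω} [IsProbabilityMeasure P]
  {ι : Type*} [DecidableEq ι]

/-- Second-moment facts for sums of independent mean-zero variables. -/
lemma aux_sum_sq (g : ι → Ω → ℝ) (hmeas : ∀ i, Measurable (g i))
    (hindep : iIndepFun g P) (v : ℝ)
    (hInt1 : ∀ i, Integrable (g i) P) (hInt2 : ∀ i, Integrable (fun ω => g i ω ^ 2) P)
    (hE1 : ∀ i, ∫ ω, g i ω ∂P = 0) (hE2 : ∀ i, ∫ ω, g i ω ^ 2 ∂P = v)
    (s : Finset ι) :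
    Integrable (fun ω => ∑ i ∈ s, g i ω) P ∧
    Integrable (fun ω => (∑ i ∈ s, g i ω) ^ 2) P ∧
    (∫ ω, ∑ i ∈ s, g i ω ∂P) = 0 ∧
    (∫ ω, (∑ i ∈ s, g i ω) ^ 2 ∂P) = s.card * v := by
  classical
  induction s using Finset.induction_on with
  | empty => simp
  | @insert a s ha ih =>
    obtain ⟨iW1, iW2, eW1, eW2⟩ := ih
    set W : Ω → ℝ := fun ω => ∑ i ∈ s, g i ω with hW
    have hYW : IndepFun (g a) W P := by
      have h := (hindep.indepFun_finsetSum_of_notMem hmeas ha).symm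
      have : (∑ j ∈ s, g j) = W := by funext ω; simp [hW, Finset.sum_apply]
      rwa [this] at h
    have imul : Integrable (fun ω => g a ω * W ω) P := hYW.integrable_mul (hInt1 a) iW1
    have hsum : ∀ ω, ∑ i ∈ insert a s, g i ω = g a ω + W ω := fun ω => Finset.sum_insert ha
    have emul : (∫ ω, g a ω * W ω ∂P) = 0 := by
      rw [hYW.integral_fun_mul_eq_mul_integral (hInt1 a).1 iW1.1, hE1 a, zero_mul]
    refine ⟨?_, ?_, ?_, ?_⟩
    · exact ((hInt1 a).add iW1).congr (by filter_upwards with ω; exact (hsum ω).symm)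
    · have i2 : Integrable (fun ω => g a ω ^ 2 + (2 * (g a ω * W ω) + W ω ^ 2)) P :=
        (hInt2 a).add ((imul.const_mul 2).add iW2)
      refine i2.congr ?_
      filter_upwards with ω
      rw [hsum ω]; ring
    · have : (fun ω => ∑ i ∈ insert a s, g i ω) = fun ω => g a ω + W ω := funext hsum
      rw [this, integral_add (hInt1 a) iW1, hE1 a, eW1, add_zero]
    · have : (fun ω => (∑ i ∈ insert a s, g i ω) ^ 2)
          = fun ω => g a ω ^ 2 + (2 * (g a ω * W ω) + W ω ^ 2) := by
        funext ω; rw [hsum ω]; ring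
      have i2 : Integrable (fun ω => 2 * (g a ω * W ω) + W ω ^ 2) P :=
        (imul.const_mul 2).add iW2
      have i3 : Integrable (fun ω => 2 * (g a ω * W ω)) P := imul.const_mul 2
      rw [this, integral_add (hInt2 a) i2, integral_add i3 iW2,
        integral_const_mul, emul, hE2 a, eW2,
        Finset.card_insert_of_notMem ha]
      push_cast
      ring

/-- Moments up to order four for sums of independent mean-zero variables. -/
lemma aux_sum_four (g : ι → Ω → ℝ) (hmeas : ∀ i, Measurable (g i))
    (hindep : iIndepFun g P) (m2 m3 m4 : ℝ)
    (hInt1 : ∀ i, Integrable (g i) P) (hInt2 : ∀ i, Integrable (fun ω => g i ω ^ 2) P)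
    (hInt3 : ∀ i, Integrable (fun ω => g i ω ^ 3) P)
    (hInt4 : ∀ i, Integrable (fun ω => g i ω ^ 4) P)
    (hE1 : ∀ i, ∫ ω, g i ω ∂P = 0) (hE2 : ∀ i, ∫ ω, g i ω ^ 2 ∂P = m2)
    (hE3 : ∀ i, ∫ ω, g i ω ^ 3 ∂P = m3) (hE4 : ∀ i, ∫ ω, g i ω ^ 4 ∂P = m4)
    (s : Finset ι) :
    (Integrable (fun ω => ∑ i ∈ s, g i ω) P ∧
     Integrable (fun ω => (∑ i ∈ s, g i ω) ^ 2) P ∧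
     Integrable (fun ω => (∑ i ∈ s, g i ω) ^ 3) P ∧
     Integrable (fun ω => (∑ i ∈ s, g i ω) ^ 4) P) ∧
    (∫ ω, ∑ i ∈ s, g i ω ∂P) = 0 ∧
    (∫ ω, (∑ i ∈ s, g i ω) ^ 2 ∂P) = s.card * m2 ∧
    (∫ ω, (∑ i ∈ s, g i ω) ^ 3 ∂P) = s.card * m3 ∧
    (∫ ω, (∑ i ∈ s, g i ω) ^ 4 ∂P)
      = s.card * m4 + 3 * s.card * (s.card - 1) * m2 ^ 2 := by
  classical
  induction s using Finset.induction_on with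
  | empty => simp
  | @insert a s ha ih =>
    obtain ⟨⟨iW1, iW2, iW3, iW4⟩, eW1, eW2, eW3, eW4⟩ := ih
    set W : Ω → ℝ := fun ω => ∑ i ∈ s, g i ω with hW
    have hYW : IndepFun (g a) W P := by
      have h := (hindep.indepFun_finsetSum_of_notMem hmeas ha).symm
      have : (∑ j ∈ s, g j) = W := by funext ω; simp [hW, Finset.sum_apply]
      rwa [this] at h
    have mpow : ∀ k : ℕ, Measurable (fun x : ℝ => x ^ k) :=
      fun k => measurable_id.pow_const k
    have h12 : IndepFun (g a) (fun ω => W ω ^ 2) P := hYW.comp measurable_id (mpow 2)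
    have h13 : IndepFun (g a) (fun ω => W ω ^ 3) P := hYW.comp measurable_id (mpow 3)
    have h21 : IndepFun (fun ω => g a ω ^ 2) W P := hYW.comp (mpow 2) measurable_id
    have h22 : IndepFun (fun ω => g a ω ^ 2) (fun ω => W ω ^ 2) P :=
      hYW.comp (mpow 2) (mpow 2)
    have h31 : IndepFun (fun ω => g a ω ^ 3) W P := hYW.comp (mpow 3) measurable_id
    -- integrability of cross terms
    have i11 : Integrable (fun ω => g a ω * W ω) P := hYW.integrable_mul (hInt1 a) iW1
    have i12 : Integrable (fun ω => g a ω * W ω ^ 2) P := h12.integrable_mul (hInt1 a) iW2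
    have i13 : Integrable (fun ω => g a ω * W ω ^ 3) P := h13.integrable_mul (hInt1 a) iW3
    have i21 : Integrable (fun ω => g a ω ^ 2 * W ω) P := h21.integrable_mul (hInt2 a) iW1
    have i22 : Integrable (fun ω => g a ω ^ 2 * W ω ^ 2) P := h22.integrable_mul (hInt2 a) iW2
    have i31 : Integrable (fun ω => g a ω ^ 3 * W ω) P := h31.integrable_mul (hInt3 a) iW1
    -- integrals of cross terms
    have e11 : (∫ ω, g a ω * W ω ∂P) = 0 := by
      rw [hYW.integral_fun_mul_eq_mul_integral (hInt1 a).1 iW1.1, hE1 a, zero_mul]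
    have e12 : (∫ ω, g a ω * W ω ^ 2 ∂P) = 0 := by
      rw [h12.integral_fun_mul_eq_mul_integral (hInt1 a).1 iW2.1, hE1 a, zero_mul]
    have e13 : (∫ ω, g a ω * W ω ^ 3 ∂P) = 0 := by
      rw [h13.integral_fun_mul_eq_mul_integral (hInt1 a).1 iW3.1, hE1 a, zero_mul]
    have e21 : (∫ ω, g a ω ^ 2 * W ω ∂P) = 0 := by
      rw [h21.integral_fun_mul_eq_mul_integral (hInt2 a).1 iW1.1, eW1, mul_zero]
    have e22 : (∫ ω, g a ω ^ 2 * W ω ^ 2 ∂P) = m2 * (s.card * m2) := by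
      rw [h22.integral_fun_mul_eq_mul_integral (hInt2 a).1 iW2.1, hE2 a, eW2]
    have e31 : (∫ ω, g a ω ^ 3 * W ω ∂P) = 0 := by
      rw [h31.integral_fun_mul_eq_mul_integral (hInt3 a).1 iW1.1, eW1, mul_zero]
    have hsum : ∀ ω, ∑ i ∈ insert a s, g i ω = g a ω + W ω := fun ω => Finset.sum_insert ha
    have hcard : ((insert a s).card : ℝ) = s.card + 1 := by
      rw [Finset.card_insert_of_notMem ha]; push_cast; ring
    -- integrable conclusions
    have j1 : Integrable (fun ω => g a ω + W ω) P := (hInt1 a).add iW1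
    have j2 : Integrable (fun ω => g a ω ^ 2 + (2 * (g a ω * W ω) + W ω ^ 2)) P :=
      (hInt2 a).add ((i11.const_mul 2).add iW2)
    have j3 : Integrable (fun ω => g a ω ^ 3 +
        (3 * (g a ω ^ 2 * W ω) + (3 * (g a ω * W ω ^ 2) + W ω ^ 3))) P :=
      (hInt3 a).add ((i21.const_mul 3).add ((i12.const_mul 3).add iW3))
    have j4 : Integrable (fun ω => g a ω ^ 4 + (4 * (g a ω ^ 3 * W ω) +
        (6 * (g a ω ^ 2 * W ω ^ 2) + (4 * (g a ω * W ω ^ 3) + W ω ^ 4)))) P :=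
      (hInt4 a).add ((i31.const_mul 4).add ((i22.const_mul 6).add
        ((i13.const_mul 4).add iW4)))
    have k2a : Integrable (fun ω => 2 * (g a ω * W ω)) P := i11.const_mul 2
    have k2b : Integrable (fun ω => 2 * (g a ω * W ω) + W ω ^ 2) P := k2a.add iW2
    have k3a : Integrable (fun ω => 3 * (g a ω ^ 2 * W ω)) P := i21.const_mul 3
    have k3a' : Integrable (fun ω => 3 * (g a ω * W ω ^ 2)) P := i12.const_mul 3
    have k3c : Integrable (fun ω => 3 * (g a ω * W ω ^ 2) + W ω ^ 3) P := k3a'.add iW3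
    have k3b : Integrable (fun ω => 3 * (g a ω ^ 2 * W ω) + (3 * (g a ω * W ω ^ 2) + W ω ^ 3)) P :=
      k3a.add k3c
    have k4a : Integrable (fun ω => 4 * (g a ω ^ 3 * W ω)) P := i31.const_mul 4
    have k4a' : Integrable (fun ω => 6 * (g a ω ^ 2 * W ω ^ 2)) P := i22.const_mul 6
    have k4a'' : Integrable (fun ω => 4 * (g a ω * W ω ^ 3)) P := i13.const_mul 4
    have k4d : Integrable (fun ω => 4 * (g a ω * W ω ^ 3) + W ω ^ 4) P := k4a''.add iW4
    have k4c : Integrable (fun ω => 6 * (g a ω ^ 2 * W ω ^ 2) + (4 * (g a ω * W ω ^ 3) + W ω ^ 4)) P :=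
      k4a'.add k4d
    have k4b : Integrable (fun ω => 4 * (g a ω ^ 3 * W ω) +
        (6 * (g a ω ^ 2 * W ω ^ 2) + (4 * (g a ω * W ω ^ 3) + W ω ^ 4))) P := k4a.add k4c
    refine ⟨⟨?_, ?_, ?_, ?_⟩, ?_, ?_, ?_, ?_⟩
    · exact j1.congr (by filter_upwards with ω; exact (hsum ω).symm)
    · exact j2.congr (by filter_upwards with ω; rw [hsum ω]; ring)
    · exact j3.congr (by filter_upwards with ω; rw [hsum ω]; ring)
    · exact j4.congr (by filter_upwards with ω; rw [hsum ω]; ring)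
    · have : (fun ω => ∑ i ∈ insert a s, g i ω) = fun ω => g a ω + W ω := funext hsum
      rw [this, integral_add (hInt1 a) iW1, hE1 a, eW1, add_zero]
    · have : (fun ω => (∑ i ∈ insert a s, g i ω) ^ 2)
          = fun ω => g a ω ^ 2 + (2 * (g a ω * W ω) + W ω ^ 2) := by
        funext ω; rw [hsum ω]; ring
      rw [this, integral_add (hInt2 a) k2b,
        integral_add k2a iW2, integral_const_mul, e11, hE2 a, eW2, hcard]
      ring
    · have : (fun ω => (∑ i ∈ insert a s, g i ω) ^ 3)
          = fun ω => g a ω ^ 3 + (3 * (g a ω ^ 2 * W ω) + (3 * (g a ω * W ω ^ 2) + W ω ^ 3)) := by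
        funext ω; rw [hsum ω]; ring
      rw [this, integral_add (hInt3 a) k3b, integral_add k3a k3c,
        integral_add k3a' iW3, integral_const_mul, integral_const_mul,
        e21, e12, hE3 a, eW3, hcard]
      ring
    · have : (fun ω => (∑ i ∈ insert a s, g i ω) ^ 4)
          = fun ω => g a ω ^ 4 + (4 * (g a ω ^ 3 * W ω) +
            (6 * (g a ω ^ 2 * W ω ^ 2) + (4 * (g a ω * W ω ^ 3) + W ω ^ 4))) := by
        funext ω; rw [hsum ω]; ring
      rw [this, integral_add (hInt4 a) k4b, integral_add k4a k4c,
        integral_add k4a' k4d, integral_add k4a'' iW4,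
        integral_const_mul, integral_const_mul, integral_const_mul,
        e31, e22, e13, hE4 a, eW4, hcard]
      ring

/-- Moments of `Q = ∑ Yᵢ² - (∑ Yᵢ)²/n` for centered variables with common moments. -/
lemma aux_Q (n : ℕ) (hn : 2 ≤ n) (Y : Fin n → Ω → ℝ) (hmeasY : ∀ i, Measurable (Y i))
    (hindepY : iIndepFun Y P) (σ2 μ3 μ4 : ℝ)
    (hI1 : ∀ i, Integrable (Y i) P) (hI2 : ∀ i, Integrable (fun ω => Y i ω ^ 2) P)
    (hI3 : ∀ i, Integrable (fun ω => Y i ω ^ 3) P)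
    (hI4 : ∀ i, Integrable (fun ω => Y i ω ^ 4) P)
    (hE1 : ∀ i, ∫ ω, Y i ω ∂P = 0) (hE2 : ∀ i, ∫ ω, Y i ω ^ 2 ∂P = σ2)
    (hE3 : ∀ i, ∫ ω, Y i ω ^ 3 ∂P = μ3) (hE4 : ∀ i, ∫ ω, Y i ω ^ 4 ∂P = μ4) :
    Integrable (fun ω => ∑ i, Y i ω ^ 2 - (∑ i, Y i ω) ^ 2 / n) P ∧
    Integrable (fun ω => (∑ i, Y i ω ^ 2 - (∑ i, Y i ω) ^ 2 / n) ^ 2) P ∧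
    (∫ ω, (∑ i, Y i ω ^ 2 - (∑ i, Y i ω) ^ 2 / n) ∂P) = ((n : ℝ) - 1) * σ2 ∧
    (∫ ω, (∑ i, Y i ω ^ 2 - (∑ i, Y i ω) ^ 2 / n) ^ 2 ∂P)
      = ((n : ℝ) - 1) ^ 2 / n * μ4
        + ((n : ℝ) - 1) * ((n : ℝ) ^ 2 - 2 * n + 3) / n * σ2 ^ 2 := by
  classical
  have hn1 : (1 : ℕ) ≤ n := by omega
  have hN : (n : ℝ) ≠ 0 := by positivity
  -- S facts
  obtain ⟨⟨iS1, iS2, iS3, iS4⟩, eS1, eS2, eS3, eS4⟩ :=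
    aux_sum_four Y hmeasY hindepY σ2 μ3 μ4 hI1 hI2 hI3 hI4 hE1 hE2 hE3 hE4 Finset.univ
  simp only [Finset.card_univ, Fintype.card_fin] at eS2 eS3 eS4
  set S : Ω → ℝ := fun ω => ∑ i, Y i ω with hSdef
  -- centered squares
  set Z : Fin n → Ω → ℝ := fun i ω => Y i ω ^ 2 - σ2 with hZdef
  have hmeasZ : ∀ i, Measurable (Z i) := fun i => ((hmeasY i).pow_const 2).sub_const σ2
  have hindepZ : iIndepFun Z P :=
    hindepY.comp (fun _ x => x ^ 2 - σ2) (fun _ => (measurable_id.pow_const 2).sub_const σ2)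
  have hIZ1 : ∀ i, Integrable (Z i) P := fun i => (hI2 i).sub (integrable_const σ2)
  have hIZ2 : ∀ i, Integrable (fun ω => Z i ω ^ 2) P := by
    intro i
    have ia : Integrable (fun ω => 2 * σ2 * Y i ω ^ 2) P := (hI2 i).const_mul (2 * σ2)
    have ib : Integrable (fun ω => Y i ω ^ 4 - 2 * σ2 * Y i ω ^ 2) P := (hI4 i).sub ia
    have ic : Integrable (fun ω => Y i ω ^ 4 - 2 * σ2 * Y i ω ^ 2 + σ2 ^ 2) P :=
      ib.add (integrable_const _)
    exact ic.congr (by filter_upwards with ω; simp only [hZdef]; ring)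
  have hEZ1 : ∀ i, ∫ ω, Z i ω ∂P = 0 := by
    intro i
    simp only [hZdef]
    rw [integral_sub (hI2 i) (integrable_const σ2), hE2 i, integral_const]
    simp
  have hEZ2 : ∀ i, ∫ ω, Z i ω ^ 2 ∂P = μ4 - σ2 ^ 2 := by
    intro i
    have ia : Integrable (fun ω => 2 * σ2 * Y i ω ^ 2) P := (hI2 i).const_mul (2 * σ2)
    have ib : Integrable (fun ω => Y i ω ^ 4 - 2 * σ2 * Y i ω ^ 2) P := (hI4 i).sub ia
    have hfe : (fun ω => Z i ω ^ 2)
        = fun ω => Y i ω ^ 4 - 2 * σ2 * Y i ω ^ 2 + σ2 ^ 2 := by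
      funext ω; simp only [hZdef]; ring
    rw [hfe, integral_add ib (integrable_const _), integral_sub (hI4 i) ia,
      integral_const_mul, hE4 i, hE2 i, integral_const]
    simp only [measure_univ, probReal_univ, ENNReal.toReal_one, smul_eq_mul, one_mul]
    ring
  obtain ⟨iT'1, iT'2, eT'1, eT'2⟩ :=
    aux_sum_sq Z hmeasZ hindepZ (μ4 - σ2 ^ 2) hIZ1 hIZ2 hEZ1 hEZ2 Finset.univ
  simp only [Finset.card_univ, Fintype.card_fin] at eT'2
  set T' : Ω → ℝ := fun ω => ∑ i, Z i ω with hT'def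
  have hTZ : ∀ ω, (∑ i, Y i ω ^ 2) = T' ω + n * σ2 := by
    intro ω
    have : T' ω = (∑ i, Y i ω ^ 2) - n * σ2 := by
      simp [hT'def, hZdef, Finset.sum_sub_distrib, Finset.card_univ, Fintype.card_fin]
    linarith
  -- T facts
  have iT1 : Integrable (fun ω => ∑ i, Y i ω ^ 2) P :=
    (iT'1.add (integrable_const ((n : ℝ) * σ2))).congr
      (by filter_upwards with ω; exact (hTZ ω).symm)
  have eT1 : (∫ ω, ∑ i, Y i ω ^ 2 ∂P) = n * σ2 := by
    have hfe : (fun ω => ∑ i, Y i ω ^ 2) = fun ω => T' ω + n * σ2 := funext hTZ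
    rw [hfe, integral_add iT'1 (integrable_const _), eT'1, integral_const]
    simp
  have ia2 : Integrable (fun ω => 2 * ((n : ℝ) * σ2) * T' ω) P := iT'1.const_mul _
  have ib2 : Integrable (fun ω => T' ω ^ 2 + 2 * ((n : ℝ) * σ2) * T' ω) P := iT'2.add ia2
  have ic2 : Integrable (fun ω => T' ω ^ 2 + 2 * ((n : ℝ) * σ2) * T' ω
      + ((n : ℝ) * σ2) ^ 2) P := ib2.add (integrable_const _)
  have iT2 : Integrable (fun ω => (∑ i, Y i ω ^ 2) ^ 2) P := by
    refine ic2.congr ?_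
    filter_upwards with ω
    rw [hTZ ω]; ring
  have eT2 : (∫ ω, (∑ i, Y i ω ^ 2) ^ 2 ∂P) = n * μ4 + n * ((n : ℝ) - 1) * σ2 ^ 2 := by
    have hfe : (fun ω => (∑ i, Y i ω ^ 2) ^ 2)
        = fun ω => T' ω ^ 2 + 2 * ((n : ℝ) * σ2) * T' ω + ((n : ℝ) * σ2) ^ 2 := by
      funext ω; rw [hTZ ω]; ring
    rw [hfe, integral_add ib2 (integrable_const _), integral_add iT'2 ia2,
      integral_const_mul, eT'1, eT'2, integral_const]
    simp only [measure_univ, probReal_univ, ENNReal.toReal_one, smul_eq_mul, one_mul, mul_zero, add_zero]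
    ring
  -- mixed term, per index
  have hMix : ∀ i : Fin n, Integrable (fun ω => Y i ω ^ 2 * S ω ^ 2) P ∧
      (∫ ω, Y i ω ^ 2 * S ω ^ 2 ∂P) = μ4 + ((n : ℝ) - 1) * σ2 ^ 2 := by
    intro i
    obtain ⟨⟨iW1, iW2, _, _⟩, eW1, eW2, _, _⟩ :=
      aux_sum_four Y hmeasY hindepY σ2 μ3 μ4 hI1 hI2 hI3 hI4 hE1 hE2 hE3 hE4
        (Finset.univ.erase i)
    have hcard : (((Finset.univ.erase i).card : ℕ) : ℝ) = (n : ℝ) - 1 := by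
      rw [Finset.card_erase_of_mem (Finset.mem_univ i), Finset.card_univ, Fintype.card_fin,
        Nat.cast_sub hn1]
      simp
    rw [hcard] at eW2
    set W : Ω → ℝ := fun ω => ∑ j ∈ Finset.univ.erase i, Y j ω with hWdef
    have hYW : IndepFun (Y i) W P := by
      have h := (hindepY.indepFun_finsetSum_of_notMem hmeasY
        (Finset.notMem_erase i Finset.univ)).symm
      have heq : (∑ j ∈ Finset.univ.erase i, Y j) = W := by
        funext ω; simp [hWdef, Finset.sum_apply]
      rwa [heq] at h
    have h31 : IndepFun (fun ω => Y i ω ^ 3) W P :=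
      hYW.comp (measurable_id.pow_const 3) measurable_id
    have h22 : IndepFun (fun ω => Y i ω ^ 2) (fun ω => W ω ^ 2) P :=
      hYW.comp (measurable_id.pow_const 2) (measurable_id.pow_const 2)
    have i31 : Integrable (fun ω => Y i ω ^ 3 * W ω) P := h31.integrable_mul (hI3 i) iW1
    have i22 : Integrable (fun ω => Y i ω ^ 2 * W ω ^ 2) P := h22.integrable_mul (hI2 i) iW2
    have e31 : (∫ ω, Y i ω ^ 3 * W ω ∂P) = 0 := by
      rw [h31.integral_fun_mul_eq_mul_integral (hI3 i).1 iW1.1, eW1, mul_zero]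
    have e22 : (∫ ω, Y i ω ^ 2 * W ω ^ 2 ∂P) = σ2 * (((n : ℝ) - 1) * σ2) := by
      rw [h22.integral_fun_mul_eq_mul_integral (hI2 i).1 iW2.1, hE2 i, eW2]
    have hsplit : ∀ ω, S ω = Y i ω + W ω := by
      intro ω
      rw [hSdef, hWdef]
      exact (Finset.add_sum_erase _ _ (Finset.mem_univ i)).symm
    have ka : Integrable (fun ω => 2 * (Y i ω ^ 3 * W ω)) P := i31.const_mul 2
    have kb : Integrable (fun ω => 2 * (Y i ω ^ 3 * W ω) + Y i ω ^ 2 * W ω ^ 2) P := ka.add i22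
    have hfe : (fun ω => Y i ω ^ 2 * S ω ^ 2)
        = fun ω => Y i ω ^ 4 + (2 * (Y i ω ^ 3 * W ω) + Y i ω ^ 2 * W ω ^ 2) := by
      funext ω; rw [hsplit ω]; ring
    have kc : Integrable (fun ω => Y i ω ^ 4
        + (2 * (Y i ω ^ 3 * W ω) + Y i ω ^ 2 * W ω ^ 2)) P := (hI4 i).add kb
    constructor
    · exact kc.congr (by filter_upwards with ω; rw [hsplit ω]; ring)
    · rw [hfe, integral_add (hI4 i) kb, integral_add ka i22, integral_const_mul,
        e31, e22, hE4 i]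
      ring
  -- T*S² facts
  have hTSfe : (fun ω => (∑ i, Y i ω ^ 2) * S ω ^ 2)
      = fun ω => ∑ i, Y i ω ^ 2 * S ω ^ 2 := by
    funext ω; rw [Finset.sum_mul]
  have iTS : Integrable (fun ω => (∑ i, Y i ω ^ 2) * S ω ^ 2) P := by
    rw [hTSfe]
    exact integrable_finset_sum _ (fun i _ => (hMix i).1)
  have eTS : (∫ ω, (∑ i, Y i ω ^ 2) * S ω ^ 2 ∂P)
      = n * (μ4 + ((n : ℝ) - 1) * σ2 ^ 2) := by
    rw [hTSfe, integral_finset_sum _ (fun i _ => (hMix i).1)]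
    rw [Finset.sum_congr rfl (fun i _ => (hMix i).2)]
    simp only [Finset.sum_const, Finset.card_univ, Fintype.card_fin, nsmul_eq_mul]
  -- Q facts
  have iQ : Integrable (fun ω => ∑ i, Y i ω ^ 2 - S ω ^ 2 / n) P :=
    iT1.sub (iS2.div_const n)
  have eQ : (∫ ω, (∑ i, Y i ω ^ 2 - S ω ^ 2 / n) ∂P) = ((n : ℝ) - 1) * σ2 := by
    rw [integral_sub iT1 (iS2.div_const n), integral_div, eT1, eS2]
    field_simp
  have la : Integrable (fun ω => 2 / (n : ℝ) * ((∑ i, Y i ω ^ 2) * S ω ^ 2)) P :=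
    iTS.const_mul _
  have lb : Integrable (fun ω => (∑ i, Y i ω ^ 2) ^ 2
      - 2 / (n : ℝ) * ((∑ i, Y i ω ^ 2) * S ω ^ 2)) P := iT2.sub la
  have lc : Integrable (fun ω => 1 / (n : ℝ) ^ 2 * S ω ^ 4) P := iS4.const_mul _
  have hQfe : (fun ω => (∑ i, Y i ω ^ 2 - S ω ^ 2 / n) ^ 2)
      = fun ω => ((∑ i, Y i ω ^ 2) ^ 2 - 2 / (n : ℝ) * ((∑ i, Y i ω ^ 2) * S ω ^ 2))
          + 1 / (n : ℝ) ^ 2 * S ω ^ 4 := by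
    funext ω; field_simp; ring
  have iQ2 : Integrable (fun ω => (∑ i, Y i ω ^ 2 - S ω ^ 2 / n) ^ 2) P := by
    rw [hQfe]; exact lb.add lc
  have eQ2 : (∫ ω, (∑ i, Y i ω ^ 2 - S ω ^ 2 / n) ^ 2 ∂P)
      = ((n : ℝ) - 1) ^ 2 / n * μ4
        + ((n : ℝ) - 1) * ((n : ℝ) ^ 2 - 2 * n + 3) / n * σ2 ^ 2 := by
    rw [hQfe, integral_add lb lc, integral_sub iT2 la, integral_const_mul,
      integral_const_mul, eT2, eTS, eS4]
    field_simp
    ring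
  exact ⟨iQ, iQ2, eQ, eQ2⟩

lemma arith_ratio (σ2 a : ℝ) (hσ : 0 < σ2) (ha : 0 < a) :
    (σ2 ^ 2 * (1 + a) - σ2 ^ 2) /
      ((1 + a)⁻¹ ^ 2 * (σ2 ^ 2 * (1 + a)) - 2 * (1 + a)⁻¹ * σ2 ^ 2 + σ2 ^ 2) = 1 + a := by
  have h1a : (0 : ℝ) < 1 + a := by linarith
  have h1a0 : (1 : ℝ) + a ≠ 0 := ne_of_gt h1a
  have ha0 : a ≠ 0 := ne_of_gt ha
  have hσ0 : σ2 ≠ 0 := ne_of_gt hσ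
  have hnum : σ2 ^ 2 * (1 + a) - σ2 ^ 2 = σ2 ^ 2 * a := by ring
  have hden : (1 + a)⁻¹ ^ 2 * (σ2 ^ 2 * (1 + a)) - 2 * (1 + a)⁻¹ * σ2 ^ 2 + σ2 ^ 2
      = σ2 ^ 2 * a / (1 + a) := by
    field_simp
    try ring
  rw [hnum, hden, div_div_eq_mul_div, mul_comm, mul_div_assoc,
    div_self (by positivity : σ2 ^ 2 * a ≠ 0), mul_one]

lemma arith_pos (N k : ℝ) (hN : 2 ≤ N) (hk : -2 ≤ k) : 0 < k / N + 2 / (N - 1) := by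
  have h0 : (0:ℝ) < N := by linarith
  have h1 : (0:ℝ) < N - 1 := by linarith
  have h2 : k / N + 2 / (N - 1) = (k * (N - 1) + 2 * N) / (N * (N - 1)) := by
    field_simp
    try ring
  have h3 : 0 < k * (N - 1) + 2 * N := by nlinarith
  rw [h2]
  positivity


end MbbeAux

/-- **Relative efficiency of the MSE-best biased variance estimator.**
Under the setting of Proposition 2, with `κ = μ₄/σ⁴ - 3`,
`s² = (1/(n-1)) ∑ (X i - X̄)²` and `c* = (κ/n + (n+1)/(n-1))⁻¹`, the relative
efficiency satisfies
`E[(s² - σ²)²] / E[(c* s² - σ²)²] = 1 + κ/n + 2/(n-1)` and this quantity is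
strictly greater than `1`. -/
theorem relative_efficiency_mbbe
    {Ω : Type*} [MeasurableSpace Ω] (P : Measure Ω) [IsProbabilityMeasure P]
    (n : ℕ) (hn : 2 ≤ n)
    (X : Fin n → Ω → ℝ) (hmeas : ∀ i, Measurable (X i))
    (hindep : iIndepFun X P)
    (hident : ∀ i, IdentDistrib (X i) (X ⟨0, by omega⟩) P P)
    (μ σ2 μ4 κ cstar : ℝ)
    (hμ : μ = ∫ ω, X ⟨0, by omega⟩ ω ∂P)
    (hσ2 : σ2 = ∫ ω, (X ⟨0, by omega⟩ ω - μ) ^ 2 ∂P) (hσ2pos : 0 < σ2)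
    (hμ4 : μ4 = ∫ ω, (X ⟨0, by omega⟩ ω - μ) ^ 4 ∂P)
    (hint1 : Integrable (X ⟨0, by omega⟩) P)
    (hint2 : Integrable (fun ω => (X ⟨0, by omega⟩ ω - μ) ^ 2) P)
    (hint4 : Integrable (fun ω => (X ⟨0, by omega⟩ ω - μ) ^ 4) P)
    (hκ : κ = μ4 / σ2 ^ 2 - 3)
    (hcstar : cstar = (κ / n + ((n : ℝ) + 1) / ((n : ℝ) - 1))⁻¹)
    (Xbar s2 : Ω → ℝ)
    (hXbar : ∀ ω, Xbar ω = (1 / n : ℝ) * ∑ i, X i ω)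
    (hs2 : ∀ ω, s2 ω = (1 / ((n : ℝ) - 1)) * ∑ i, (X i ω - Xbar ω) ^ 2) :
    (∫ ω, (s2 ω - σ2) ^ 2 ∂P) / (∫ ω, (cstar * s2 ω - σ2) ^ 2 ∂P) =
        1 + κ / n + 2 / ((n : ℝ) - 1) ∧
      1 < 1 + κ / n + 2 / ((n : ℝ) - 1) := by
  classical
  have hn0 : 0 < n := by omega
  have hN2 : (2 : ℝ) ≤ (n : ℝ) := by exact_mod_cast hn
  have hN0 : (n : ℝ) ≠ 0 := by positivity
  have hN1pos : (0 : ℝ) < (n : ℝ) - 1 := by linarith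
  have hN1 : (n : ℝ) - 1 ≠ 0 := ne_of_gt hN1pos
  set i0 : Fin n := ⟨0, by omega⟩ with hi0
  set Y : Fin n → Ω → ℝ := fun i ω => X i ω - μ with hYdef
  have hmeasY : ∀ i, Measurable (Y i) := fun i => (hmeas i).sub_const μ
  have hindepY : iIndepFun Y P :=
    hindep.comp (fun _ x => x - μ) (fun _ => measurable_id.sub_const μ)
  have hidY : ∀ i, IdentDistrib (Y i) (Y i0) P P := fun i =>
    (hident i).comp (measurable_id.sub_const μ)
  have hidYk : ∀ (k : ℕ) (i : Fin n),
      IdentDistrib (fun ω => Y i ω ^ k) (fun ω => Y i0 ω ^ k) P P :=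
    fun k i => (hidY i).comp (measurable_id.pow_const k)
  -- integrability at the base index
  have hI1_0 : Integrable (Y i0) P := hint1.sub (integrable_const μ)
  have hI2_0 : Integrable (fun ω => Y i0 ω ^ 2) P := hint2
  have hI4_0 : Integrable (fun ω => Y i0 ω ^ 4) P := hint4
  have cube_bound : ∀ a : ℝ, 0 ≤ a → a ^ 3 ≤ a ^ 2 + a ^ 4 := by
    intro a ha
    nlinarith [sq_nonneg (a ^ 2 - a), pow_nonneg ha 3]
  have hI3_0 : Integrable (fun ω => Y i0 ω ^ 3) P := by
    refine (hint2.add hint4).mono' ((hmeasY i0).pow_const 3).aestronglyMeasurable ?_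
    filter_upwards with ω
    have h1 : ‖Y i0 ω ^ 3‖ = |Y i0 ω| ^ 3 := by
      rw [Real.norm_eq_abs, abs_pow]
    have h2 : |Y i0 ω| ^ 2 = Y i0 ω ^ 2 := sq_abs _
    have h3 : |Y i0 ω| ^ 4 = Y i0 ω ^ 4 := by
      rw [← abs_pow]; exact abs_of_nonneg (by positivity)
    have h4 := cube_bound |Y i0 ω| (abs_nonneg _)
    rw [h1]
    calc |Y i0 ω| ^ 3 ≤ |Y i0 ω| ^ 2 + |Y i0 ω| ^ 4 := h4
      _ = Y i0 ω ^ 2 + Y i0 ω ^ 4 := by rw [h2, h3]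
  have hI1 : ∀ i, Integrable (Y i) P := fun i => (hidY i).integrable_iff.mpr hI1_0
  have hI2 : ∀ i, Integrable (fun ω => Y i ω ^ 2) P :=
    fun i => (hidYk 2 i).integrable_iff.mpr hI2_0
  have hI3 : ∀ i, Integrable (fun ω => Y i ω ^ 3) P :=
    fun i => (hidYk 3 i).integrable_iff.mpr hI3_0
  have hI4 : ∀ i, Integrable (fun ω => Y i ω ^ 4) P :=
    fun i => (hidYk 4 i).integrable_iff.mpr hI4_0
  -- moments
  have hE1_0 : ∫ ω, Y i0 ω ∂P = 0 := by
    rw [show (fun ω => Y i0 ω) = fun ω => X i0 ω - μ from rfl]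
    rw [integral_sub hint1 (integrable_const μ), integral_const]
    simp [← hμ]
  have hE1 : ∀ i, ∫ ω, Y i ω ∂P = 0 := fun i => (hidY i).integral_eq.trans hE1_0
  have hE2 : ∀ i, ∫ ω, Y i ω ^ 2 ∂P = σ2 := fun i =>
    (hidYk 2 i).integral_eq.trans hσ2.symm
  have hE4 : ∀ i, ∫ ω, Y i ω ^ 4 ∂P = μ4 := fun i =>
    (hidYk 4 i).integral_eq.trans hμ4.symm
  have hE3 : ∀ i, ∫ ω, Y i ω ^ 3 ∂P = ∫ ω, Y i0 ω ^ 3 ∂P := fun i =>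
    (hidYk 3 i).integral_eq
  obtain ⟨iQ, iQ2, eQ, eQ2⟩ := aux_Q n hn Y hmeasY hindepY σ2 (∫ ω, Y i0 ω ^ 3 ∂P) μ4
    hI1 hI2 hI3 hI4 hE1 hE2 hE3 hE4
  -- pointwise identity for s2
  have hs2Q : ∀ ω, s2 ω = (1 / ((n : ℝ) - 1))
      * (∑ i, Y i ω ^ 2 - (∑ i, Y i ω) ^ 2 / n) := by
    intro ω
    rw [hs2 ω]
    congr 1
    have hXb : Xbar ω = μ + (∑ i, Y i ω) / n := by
      rw [hXbar ω]
      have hsx : (∑ i, X i ω) = (∑ i, Y i ω) + n * μ := by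
        simp only [hYdef, Finset.sum_sub_distrib, Finset.sum_const, Finset.card_univ,
          Fintype.card_fin, nsmul_eq_mul]
        ring
      rw [hsx]
      field_simp
      ring
    have hterm : ∀ i : Fin n, X i ω - Xbar ω = Y i ω - (∑ j, Y j ω) / n := by
      intro i
      rw [hXb, hYdef]
      ring
    calc ∑ i, (X i ω - Xbar ω) ^ 2
        = ∑ i, (Y i ω ^ 2 - 2 * ((∑ j, Y j ω) / n) * Y i ω + ((∑ j, Y j ω) / n) ^ 2) := by
          refine Finset.sum_congr rfl fun i _ => ?_
          rw [hterm i]; ring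
      _ = (∑ i, Y i ω ^ 2) - 2 * ((∑ j, Y j ω) / n) * (∑ i, Y i ω)
            + n * ((∑ j, Y j ω) / n) ^ 2 := by
          rw [Finset.sum_add_distrib, Finset.sum_sub_distrib, ← Finset.mul_sum,
            Finset.sum_const, Finset.card_univ, Fintype.card_fin, nsmul_eq_mul]
      _ = ∑ i, Y i ω ^ 2 - (∑ i, Y i ω) ^ 2 / n := by field_simp; ring
  -- numerator and denominator
  set V : ℝ := ((n : ℝ) - 1) ^ 2 / n * μ4
    + ((n : ℝ) - 1) * ((n : ℝ) ^ 2 - 2 * n + 3) / n * σ2 ^ 2 with hV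
  set A : ℝ := (1 / ((n : ℝ) - 1)) ^ 2 * V with hA
  have num_eq : (∫ ω, (s2 ω - σ2) ^ 2 ∂P) = A - σ2 ^ 2 := by
    have l1 : Integrable (fun ω => (1 / ((n : ℝ) - 1)) ^ 2
        * (∑ i, Y i ω ^ 2 - (∑ i, Y i ω) ^ 2 / n) ^ 2) P := iQ2.const_mul _
    have l2 : Integrable (fun ω => 2 * (1 / ((n : ℝ) - 1)) * σ2
        * (∑ i, Y i ω ^ 2 - (∑ i, Y i ω) ^ 2 / n)) P := iQ.const_mul _
    have l3 : Integrable (fun ω => (1 / ((n : ℝ) - 1)) ^ 2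
        * (∑ i, Y i ω ^ 2 - (∑ i, Y i ω) ^ 2 / n) ^ 2
        - 2 * (1 / ((n : ℝ) - 1)) * σ2 * (∑ i, Y i ω ^ 2 - (∑ i, Y i ω) ^ 2 / n)) P :=
      l1.sub l2
    have hfe : (fun ω => (s2 ω - σ2) ^ 2)
        = fun ω => ((1 / ((n : ℝ) - 1)) ^ 2
            * (∑ i, Y i ω ^ 2 - (∑ i, Y i ω) ^ 2 / n) ^ 2
          - 2 * (1 / ((n : ℝ) - 1)) * σ2 * (∑ i, Y i ω ^ 2 - (∑ i, Y i ω) ^ 2 / n))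
          + σ2 ^ 2 := by
      funext ω; rw [hs2Q ω]; ring
    rw [hfe, integral_add l3 (integrable_const _), integral_sub l1 l2,
      integral_const_mul, integral_const_mul, eQ, eQ2, integral_const]
    simp only [measure_univ, probReal_univ, ENNReal.toReal_one, smul_eq_mul, one_mul]
    rw [hA, hV]
    field_simp
    ring
  have den_eq : (∫ ω, (cstar * s2 ω - σ2) ^ 2 ∂P)
      = cstar ^ 2 * A - 2 * cstar * σ2 ^ 2 + σ2 ^ 2 := by
    have l1 : Integrable (fun ω => cstar ^ 2 * (1 / ((n : ℝ) - 1)) ^ 2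
        * (∑ i, Y i ω ^ 2 - (∑ i, Y i ω) ^ 2 / n) ^ 2) P := iQ2.const_mul _
    have l2 : Integrable (fun ω => 2 * cstar * (1 / ((n : ℝ) - 1)) * σ2
        * (∑ i, Y i ω ^ 2 - (∑ i, Y i ω) ^ 2 / n)) P := iQ.const_mul _
    have l3 : Integrable (fun ω => cstar ^ 2 * (1 / ((n : ℝ) - 1)) ^ 2
        * (∑ i, Y i ω ^ 2 - (∑ i, Y i ω) ^ 2 / n) ^ 2
        - 2 * cstar * (1 / ((n : ℝ) - 1)) * σ2
          * (∑ i, Y i ω ^ 2 - (∑ i, Y i ω) ^ 2 / n)) P := l1.sub l2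
    have hfe : (fun ω => (cstar * s2 ω - σ2) ^ 2)
        = fun ω => (cstar ^ 2 * (1 / ((n : ℝ) - 1)) ^ 2
            * (∑ i, Y i ω ^ 2 - (∑ i, Y i ω) ^ 2 / n) ^ 2
          - 2 * cstar * (1 / ((n : ℝ) - 1)) * σ2
            * (∑ i, Y i ω ^ 2 - (∑ i, Y i ω) ^ 2 / n)) + σ2 ^ 2 := by
      funext ω; rw [hs2Q ω]; ring
    rw [hfe, integral_add l3 (integrable_const _), integral_sub l1 l2,
      integral_const_mul, integral_const_mul, eQ, eQ2, integral_const]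
    simp only [measure_univ, probReal_univ, ENNReal.toReal_one, smul_eq_mul, one_mul]
    rw [hA, hV]
    field_simp
  -- arithmetic endgame
  have hμ4e : μ4 = (κ + 3) * σ2 ^ 2 := by
    have hs : σ2 ^ 2 ≠ 0 := by positivity
    rw [hκ]
    field_simp
    ring
  have hAe : A = σ2 ^ 2 * (1 + (κ / n + 2 / ((n : ℝ) - 1))) := by
    rw [hA, hV, hμ4e]
    field_simp
    ring
  -- κ ≥ -2
  have hvar4 : σ2 ^ 2 ≤ μ4 := by
    have ia : Integrable (fun ω => 2 * σ2 * Y i0 ω ^ 2) P := hI2_0.const_mul _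
    have ib : Integrable (fun ω => Y i0 ω ^ 4 - 2 * σ2 * Y i0 ω ^ 2) P := hI4_0.sub ia
    have h0 : 0 ≤ ∫ ω, (Y i0 ω ^ 2 - σ2) ^ 2 ∂P :=
      integral_nonneg fun ω => sq_nonneg _
    have he : (∫ ω, (Y i0 ω ^ 2 - σ2) ^ 2 ∂P) = μ4 - σ2 ^ 2 := by
      have hfe : (fun ω => (Y i0 ω ^ 2 - σ2) ^ 2)
          = fun ω => Y i0 ω ^ 4 - 2 * σ2 * Y i0 ω ^ 2 + σ2 ^ 2 := by
        funext ω; ring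
      rw [hfe, integral_add ib (integrable_const _), integral_sub hI4_0 ia,
        integral_const_mul, hE4 i0, hE2 i0, integral_const]
      simp only [measure_univ, probReal_univ, ENNReal.toReal_one, smul_eq_mul, one_mul]
      ring
    rw [he] at h0
    linarith
  have hκ2 : (-2 : ℝ) ≤ κ := by
    have hs : (0 : ℝ) < σ2 ^ 2 := by positivity
    have : (1 : ℝ) ≤ μ4 / σ2 ^ 2 := (one_le_div hs).2 hvar4
    rw [hκ]; linarith
  have ha_pos : 0 < κ / n + 2 / ((n : ℝ) - 1) := arith_pos _ _ hN2 hκ2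
  have h1a : (0 : ℝ) < 1 + (κ / n + 2 / ((n : ℝ) - 1)) := by linarith
  have hc : cstar = (1 + (κ / n + 2 / ((n : ℝ) - 1)))⁻¹ := by
    rw [hcstar]
    congr 1
    field_simp
    ring
  have hgoal : 1 + κ / (n : ℝ) + 2 / ((n : ℝ) - 1)
      = 1 + (κ / (n : ℝ) + 2 / ((n : ℝ) - 1)) := by ring
  constructor
  · rw [num_eq, den_eq, hAe, hc, hgoal]
    exact arith_ratio σ2 _ hσ2pos ha_pos
  · rw [hgoal]; linarith
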